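/- arXiv:2303.05355 — 5 statements merged into one kernel-verified Lean document; each statement's English description precedes it below -/
import Mathlib

section
/- Any functional T : (ℕ → ℕ) → (ℕ → ℕ) → (ℕ → ℕ) which translates characteristic functions of ranges into bounding functions (i.e., whenever g is the characteristic function of the range of f, T f g is a bounding function for the range of f) fails to be continuous at some point, where (ℕ → ℕ) × (ℕ → ℕ) carries the product of Baire space topologies. -/
theorem stmt_8 (T : (ℕ → ℕ) → (ℕ → ℕ) → (ℕ → ℕ))
    (hT : ∀ f g : ℕ → ℕ,
      (∀ n : ℕ, (∃ m, f m = n) ↔ g n > 0) →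
      (∀ n : ℕ, (∃ m, f m = n) ↔ ∃ t ≤ T f g n, f t = n)) :
    ∃ p : (ℕ → ℕ) × (ℕ → ℕ), ¬ ContinuousAt (fun q : (ℕ → ℕ) × (ℕ → ℕ) => T q.1 q.2) p := by
  classical
  set f : ℕ → ℕ := fun _ => 0 with hf
  set g : ℕ → ℕ := fun n => if n ≤ 1 then 1 else 0 with hg
  refine ⟨(f, g), ?_⟩
  intro hcont
  set F : ℕ → (ℕ → ℕ) := fun j m => if m ≤ j then 0 else 1 with hF
  have hρ : ∀ j, ∀ n, (∃ m, F j m = n) ↔ g n > 0 := by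
    intro j n
    constructor
    · rintro ⟨m, hm⟩
      simp only [hF] at hm
      simp only [hg]
      split_ifs at hm with h
      · subst hm; simp
      · subst hm; simp
    · intro hn
      simp only [hg] at hn
      split_ifs at hn with h
      · interval_cases n
        · exact ⟨0, by simp [hF]⟩
        · exact ⟨j + 1, by simp [hF]⟩
      · omega
  have hkey : ∀ j, j ≤ T (F j) g 1 := by
    intro j
    obtain ⟨t, ht, hft⟩ := (hT (F j) g (hρ j) 1).mp ⟨j + 1, by simp [hF]⟩
    simp only [hF] at hft
    split_ifs at hft with h <;> omega
  have htend : Filter.Tendsto (fun j => ((F j, g) : (ℕ → ℕ) × (ℕ → ℕ)))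
      Filter.atTop (nhds (f, g)) := by
    refine Filter.Tendsto.prodMk_nhds ?_ tendsto_const_nhds
    rw [tendsto_pi_nhds]
    intro m
    have : ∀ᶠ j in Filter.atTop, F j m = f m := by
      filter_upwards [Filter.eventually_ge_atTop (m + 1)] with j hj
      simp [hF, hf]; omega
    exact Filter.Tendsto.congr' (this.mono fun j h => h.symm) tendsto_const_nhds
  have h1 := ((continuous_apply 1).continuousAt.tendsto.comp
    (hcont.tendsto.comp htend))
  have heq : ∀ᶠ j in Filter.atTop, T (F j) g 1 = T f g 1 :=
    h1 ((isOpen_discrete {T f g 1}).mem_nhds rfl)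
  obtain ⟨j, hj, hj2⟩ := (heq.and (Filter.eventually_ge_atTop (T f g 1 + 1))).exists
  have := hkey j
  omega
end

section
/- If R : (ℕ → ℕ) → ℕ is a realizer for LPO (R(f) = 0 ↔ ∃ n, f(n) = 0), then there exist continuous maps φ : (ℕ → ℕ) → (ℕ → ℕ) and ψ : ℕ → ℕ such that ψ ∘ R ∘ φ is a realizer for LLPOmin, i.e., for all f and n with f(n) = 0, ψ(R(φ(f))) is congruent mod 2 to the least t with f(t) = 0. -/
open Classical in
noncomputable def myG (n : ℕ) (v : Fin (n+1) → ℕ) : ℕ :=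
  if ∃ m : Fin (n+1), v m = 0 then sInf {t : ℕ | ∃ h : t < n+1, v ⟨t, h⟩ = 0} % 2 else 1

open Classical in
noncomputable def myφ (f : ℕ → ℕ) (n : ℕ) : ℕ :=
  if ∃ m, m ≤ n ∧ f m = 0 then sInf {t : ℕ | f t = 0} % 2 else 1

open Classical in
lemma myφ_eq (f : ℕ → ℕ) (n : ℕ) : myφ f n = myG n (fun i => f i) := by
  unfold myφ myG
  by_cases h : ∃ m, m ≤ n ∧ f m = 0
  · obtain ⟨m, hm, hfm⟩ := h
    rw [if_pos ⟨m, hm, hfm⟩, if_pos ⟨⟨m, Nat.lt_succ_of_le hm⟩, hfm⟩]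
    congr 1
    have hne : {t : ℕ | f t = 0}.Nonempty := ⟨m, hfm⟩
    set t0 := sInf {t : ℕ | f t = 0} with ht0
    have ht0mem : f t0 = 0 := Nat.sInf_mem hne
    have ht0le : t0 ≤ m := Nat.sInf_le hfm
    have hA : t0 ∈ {t : ℕ | ∃ h : t < n+1, f t = 0} :=
      ⟨Nat.lt_succ_of_le (ht0le.trans hm), ht0mem⟩
    have hAne : {t : ℕ | ∃ h : t < n+1, f t = 0}.Nonempty := ⟨t0, hA⟩
    obtain ⟨_, hAz⟩ := Nat.sInf_mem hAne
    exact le_antisymm (Nat.sInf_le hAz) (Nat.sInf_le hA)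
  · rw [if_neg h, if_neg]
    rintro ⟨⟨m, hm⟩, hv⟩
    exact h ⟨m, Nat.lt_succ_iff.mp hm, hv⟩

theorem stmt_10 (R : (ℕ → ℕ) → ℕ) (hR : ∀ f : ℕ → ℕ, R f = 0 ↔ ∃ n, f n = 0) :
    ∃ (φ : (ℕ → ℕ) → (ℕ → ℕ)) (ψ : ℕ → ℕ),
      Continuous φ ∧ Continuous ψ ∧
      ∀ (f : ℕ → ℕ) (n : ℕ), f n = 0 →
        ψ (R (φ f)) % 2 = sInf {t : ℕ | f t = 0} % 2 := by
  classical
  refine ⟨myφ, fun k => if k = 0 then 0 else 1, ?_, ?_, ?_⟩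
  · apply continuous_pi
    intro n
    have : (fun f => myφ f n) = (myG n) ∘ (fun f (i : Fin (n+1)) => f i) := by
      funext f; exact myφ_eq f n
    rw [this]
    exact (continuous_of_discreteTopology).comp
      (continuous_pi fun i => continuous_apply (i : ℕ))
  · exact continuous_of_discreteTopology
  · intro f n hfn
    have hne : {t : ℕ | f t = 0}.Nonempty := ⟨n, hfn⟩
    set t0 := sInf {t : ℕ | f t = 0} with ht0
    have ht0mem : f t0 = 0 := Nat.sInf_mem hne
    have key : ∀ m, myφ f m = if ∃ k, k ≤ m ∧ f k = 0 then t0 % 2 else 1 := fun m => rfl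
    by_cases hpar : t0 % 2 = 0
    · have hzero : ∃ m, myφ f m = 0 := by
        refine ⟨t0, ?_⟩
        rw [key, if_pos ⟨t0, le_refl _, ht0mem⟩, hpar]
      have : R (myφ f) = 0 := (hR _).mpr hzero
      simp [this, hpar]
    · have hnozero : ¬ ∃ m, myφ f m = 0 := by
        rintro ⟨m, hm⟩
        rw [key] at hm
        by_cases h : ∃ k, k ≤ m ∧ f k = 0
        · rw [if_pos h] at hm; exact hpar hm
        · rw [if_neg h] at hm; exact one_ne_zero hm
      have hRne : R (myφ f) ≠ 0 := fun h => hnozero ((hR _).mp h)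
      show (if R (myφ f) = 0 then 0 else 1) % 2 = t0 % 2
      rw [if_neg hRne]
      omega
end

section
/- If S : (ℕ → ℕ) → ℕ is a realizer for LLPOmin, then there exist continuous pre- and post-processing functions h : ℕ → ℕ and w : ℕ → ℕ such that the composite g ↦ w(S(h ∘ g)) is a realizer for LLPO: for every g : ℕ → ℕ, if all values of g at even positions are 0 or all values at odd positions are 0, then g(2n + w(S(h ∘ g))) = 0 for all n, and w(S(h ∘ g)) ∈ {0,1}. -/
theorem stmt_11 (S : (ℕ → ℕ) → ℕ)
    (hS : ∀ (f : ℕ → ℕ) (n : ℕ), f n = 0 → S f % 2 = sInf {t : ℕ | f t = 0} % 2) :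
    ∃ h w : ℕ → ℕ, Continuous h ∧ Continuous w ∧
      ∀ g : ℕ → ℕ,
        w (S (h ∘ g)) ≤ 1 ∧
        (((∀ n, g (2 * n) = 0) ∨ (∀ n, g (2 * n + 1) = 0)) →
          ∀ n, g (2 * n + w (S (h ∘ g))) = 0) := by
  refine ⟨fun n => if n = 0 then 1 else 0, fun n => 1 - n % 2,
    continuous_of_discreteTopology, continuous_of_discreteTopology, fun g => ?_⟩
  set f : ℕ → ℕ := (fun n => if n = 0 then 1 else 0) ∘ g with hf
  refine ⟨Nat.sub_le _ _, fun hg n => ?_⟩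
  by_cases hz : ∀ m, g m = 0
  · simp [hz]
  · push_neg at hz
    obtain ⟨m, hm⟩ := hz
    have hfm : f m = 0 := by simp [hf, Function.comp, hm]
    have hne : {t : ℕ | f t = 0}.Nonempty := ⟨m, hfm⟩
    have ht0 := Nat.sInf_mem hne
    set t0 := sInf {t : ℕ | f t = 0} with ht0def
    have hgt0 : g t0 ≠ 0 := by
      intro h0
      simp [hf, Function.comp, h0] at ht0
    have hkey := hS f m hfm
    rcases hg with hg | hg
    · -- all even positions zero, so t0 is odd
      have hodd : t0 % 2 = 1 := by
        rcases Nat.even_or_odd t0 with he | ho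
        · obtain ⟨k, hk⟩ := he
          exact absurd (by rw [show t0 = 2 * k by omega]; exact hg k) hgt0
        · exact Nat.odd_iff.mp ho
      have hSf : S f % 2 = 1 := by rw [hkey, ← ht0def, hodd]
      simp only
      rw [show 1 - S f % 2 = 0 by omega]
      simpa using hg n
    · -- all odd positions zero, so t0 is even
      have heven : t0 % 2 = 0 := by
        rcases Nat.even_or_odd t0 with he | ho
        · exact Nat.even_iff.mp he
        · obtain ⟨k, hk⟩ := ho
          exact absurd (by rw [show t0 = 2 * k + 1 by omega]; exact hg k) hgt0
      have hSf : S f % 2 = 0 := by rw [hkey, ← ht0def, heven]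
      simp only
      rw [show 1 - S f % 2 = 1 by omega]
      exact hg n
end

section
/- Any bijection H : [0,1] → [0,1] satisfying Banach's condition for f(x) = g(x) = x/2 (i.e., for every x, H(x) = x/2 or H(x) = 2x) satisfies H(1/2) = 1 but H(1/2 + 2^{-n}) = 1/4 + 2^{-(n+1)} for all n ≥ 1; hence H is not continuous at 1/2. -/
lemma pow_neg_le_half {n : ℕ} (hn : 1 ≤ n) : (2 : ℝ) ^ (-(n : ℤ)) ≤ 1 / 2 := by
  rw [zpow_neg, zpow_natCast]
  rw [inv_le_comm₀ (by positivity) (by norm_num)]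
  calc (1/2 : ℝ)⁻¹ = 2 ^ (1:ℕ) := by norm_num
  _ ≤ 2 ^ n := by exact pow_le_pow_right₀ (by norm_num) hn

lemma mem_aux {n : ℕ} (hn : 1 ≤ n) :
    (1 / 2 + (2 : ℝ) ^ (-(n : ℤ))) ∈ Set.Icc (0 : ℝ) 1 := by
  constructor
  · positivity
  · have := pow_neg_le_half hn; linarith

theorem stmt_14 (H : Set.Icc (0 : ℝ) 1 → Set.Icc (0 : ℝ) 1)
    (hbij : Function.Bijective H)
    (hBanach : ∀ x : Set.Icc (0 : ℝ) 1, (H x : ℝ) = (x : ℝ) / 2 ∨ (x : ℝ) = (H x : ℝ) / 2)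
    (h12 : (1 / 2 : ℝ) ∈ Set.Icc (0 : ℝ) 1) :
    (H ⟨1 / 2, h12⟩ : ℝ) = 1 ∧
    (∀ n : ℕ, 1 ≤ n → ∀ hx : (1 / 2 + (2 : ℝ) ^ (-(n : ℤ))) ∈ Set.Icc (0 : ℝ) 1,
      (H ⟨1 / 2 + (2 : ℝ) ^ (-(n : ℤ)), hx⟩ : ℝ) = 1 / 4 + (2 : ℝ) ^ (-((n : ℤ) + 1))) ∧
    ¬ ContinuousAt H ⟨1 / 2, h12⟩ := by
  have h1 : (1 : ℝ) ∈ Set.Icc (0 : ℝ) 1 := by norm_num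
  -- H (1/2) = 1
  have key : (H ⟨1 / 2, h12⟩ : ℝ) = 1 := by
    obtain ⟨x, hxval⟩ := hbij.2 ⟨1, h1⟩
    have hx1 : (H x : ℝ) = 1 := by rw [hxval]
    rcases hBanach x with h | h
    · exfalso
      have := x.2.2
      rw [hx1] at h; linarith
    · rw [hx1] at h
      have hx : x = ⟨1 / 2, h12⟩ := Subtype.ext (by linarith)
      rw [← hx, hx1]
  have key2 : ∀ n : ℕ, 1 ≤ n → ∀ hx : (1 / 2 + (2 : ℝ) ^ (-(n : ℤ))) ∈ Set.Icc (0 : ℝ) 1,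
      (H ⟨1 / 2 + (2 : ℝ) ^ (-(n : ℤ)), hx⟩ : ℝ) = 1 / 4 + (2 : ℝ) ^ (-((n : ℤ) + 1)) := by
    intro n hn hx
    rcases hBanach ⟨1 / 2 + (2 : ℝ) ^ (-(n : ℤ)), hx⟩ with h | h
    · rw [h]
      have : (2:ℝ) ^ (-((n : ℤ) + 1)) = (2:ℝ) ^ (-(n : ℤ)) / 2 := by
        rw [show -((n:ℤ)+1) = -(n:ℤ) - 1 by ring, zpow_sub₀ (by norm_num : (2:ℝ) ≠ 0), zpow_one]
      rw [this]; push_cast; ring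
    · exfalso
      have hH := (H ⟨1 / 2 + (2 : ℝ) ^ (-(n : ℤ)), hx⟩).2.2
      have hpos : (0:ℝ) < (2:ℝ) ^ (-(n : ℤ)) := by positivity
      linarith
  refine ⟨key, key2, ?_⟩
  intro hcont
  -- sequence
  have hmem : ∀ n : ℕ, (1 / 2 + (2 : ℝ) ^ (-((n+1 : ℕ) : ℤ))) ∈ Set.Icc (0 : ℝ) 1 :=
    fun n => mem_aux (Nat.le_add_left 1 n)
  set seq : ℕ → Set.Icc (0:ℝ) 1 := fun n => ⟨_, hmem n⟩ with hseq
  have htend : Filter.Tendsto seq Filter.atTop (nhds ⟨1/2, h12⟩) := by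
    rw [tendsto_subtype_rng]
    have : Filter.Tendsto (fun n : ℕ => (1/2 : ℝ) + (2:ℝ) ^ (-((n+1 : ℕ) : ℤ)))
        Filter.atTop (nhds (1/2 + 0)) := by
      apply Filter.Tendsto.const_add
      have : ∀ n : ℕ, (2:ℝ) ^ (-((n+1 : ℕ) : ℤ)) = (1/2 : ℝ) ^ (n+1) := by
        intro n
        rw [zpow_neg, zpow_natCast, ← inv_pow]
        norm_num
      simp only [this]
      exact (tendsto_pow_atTop_nhds_zero_of_lt_one (by norm_num) (by norm_num)).comp
        (Filter.tendsto_add_atTop_nat 1)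
    simpa [hseq] using this
  have hcomp : Filter.Tendsto (fun n => ((H (seq n)) : ℝ)) Filter.atTop (nhds 1) := by
    have h1' := (continuous_subtype_val.continuousAt.comp hcont).tendsto.comp htend
    simpa only [Function.comp_def, key] using h1'
  have hval : ∀ n : ℕ, ((H (seq n)) : ℝ) = 1/4 + (2:ℝ) ^ (-(((n+1 : ℕ) : ℤ)) - 1) := by
    intro n
    have := key2 (n+1) (Nat.le_add_left 1 n) (hmem n)
    have e : -(((n+1:ℕ)):ℤ) - 1 = -(((n+1:ℕ):ℤ)+1) := by push_cast; ring
    rw [hseq, e]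
    exact this
  have hcomp2 : Filter.Tendsto (fun n => ((H (seq n)) : ℝ)) Filter.atTop (nhds (1/4)) := by
    simp only [hval]
    have h0 : Filter.Tendsto (fun n : ℕ => (2:ℝ) ^ (-(((n+1 : ℕ) : ℤ)) - 1))
        Filter.atTop (nhds 0) := by
      have : ∀ n : ℕ, (2:ℝ) ^ (-(((n+1 : ℕ) : ℤ)) - 1) = (1/2 : ℝ) ^ (n+2) := by
        intro n
        have : (-(((n+1 : ℕ) : ℤ)) - 1) = -(((n+2 : ℕ) : ℤ)) := by push_cast; ring
        rw [this, zpow_neg, zpow_natCast, ← inv_pow]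
        norm_num
      simp only [this]
      exact (tendsto_pow_atTop_nhds_zero_of_lt_one (by norm_num) (by norm_num)).comp
        (Filter.tendsto_add_atTop_nat 2)
    simpa using (h0.const_add (1/4 : ℝ))
  have := tendsto_nhds_unique hcomp hcomp2
  norm_num at this
end

section
/- Any bijection H : (ℕ → Bool) → (ℕ → Bool) satisfying Banach's condition for f = g = P, where P is the padding map (P(x)(2m) = x(m), P(x)(odd) = false), is not sequentially continuous at the sequence 1,0,1,0,1,0,…: letting σₙ be n copies of '10' followed by '11' followed by zeros, σₙ → (10)^∞ but H(σₙ) → (1000)^∞ while H((10)^∞) is the all-ones sequence. -/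
theorem stmt_16 (P : (ℕ → Bool) → (ℕ → Bool))
    (hP : ∀ (x : ℕ → Bool) (n : ℕ), P x n = if n % 2 = 0 then x (n / 2) else false)
    (H : (ℕ → Bool) → (ℕ → Bool)) (hbij : Function.Bijective H)
    (hBanach : ∀ x : ℕ → Bool, H x = P x ∨ P (H x) = x)
    (σ : ℕ → (ℕ → Bool))
    (hσ : ∀ n k : ℕ, σ n k =
      if k < 2 * n then decide (k % 2 = 0) else if k ≤ 2 * n + 1 then true else false)
    (a : ℕ → Bool) (ha : ∀ k, a k = decide (k % 2 = 0)) :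
    Filter.Tendsto σ Filter.atTop (nhds a) ∧
    ¬ Filter.Tendsto (fun n => H (σ n)) Filter.atTop (nhds (H a)) := by
  -- H (σ n) = P (σ n)
  have hHσ : ∀ n, H (σ n) = P (σ n) := by
    intro n
    rcases hBanach (σ n) with h | h
    · exact h
    · exfalso
      have h1 : P (H (σ n)) (2 * n + 1) = σ n (2 * n + 1) := by rw [h]
      have h2 : (2 * n + 1) % 2 = 1 := by omega
      rw [hP, hσ] at h1
      simp [h2] at h1
  -- H a = all ones
  have hHa : H a = fun _ => true := by
    obtain ⟨z, hz⟩ := hbij.2 (fun _ => true)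
    have hz' : z = a := by
      rcases hBanach z with h | h
      · exfalso
        have h1 : H z 1 = P z 1 := by rw [h]
        rw [hz, hP] at h1
        simp at h1
      · funext k
        rw [← h, hP, hz, ha]
        rcases Nat.even_or_odd k with ⟨m, hm⟩ | ⟨m, hm⟩
        · have : k % 2 = 0 := by omega
          simp [this]
        · have : k % 2 = 1 := by omega
          simp [this]
    rw [← hz', hz]
  constructor
  · rw [tendsto_pi_nhds]
    intro k
    apply tendsto_const_nhds.congr'
    filter_upwards [Filter.eventually_ge_atTop (k + 1)] with n hn
    rw [hσ, ha]
    have : k < 2 * n := by omega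
    simp [this]
  · intro h
    have h1 : Filter.Tendsto (fun n => H (σ n) 1) Filter.atTop (nhds (H a 1)) :=
      (tendsto_pi_nhds.mp h) 1
    have h2 : ∀ n, H (σ n) 1 = false := by
      intro n
      rw [hHσ, hP]
      simp
    have h3 : Filter.Tendsto (fun n : ℕ => (false : Bool)) Filter.atTop (nhds (H a 1)) := by
      exact h1.congr (fun n => h2 n)
    have h4 : H a 1 = true := by rw [hHa]
    rw [h4] at h3
    have := tendsto_nhds_unique h3 tendsto_const_nhds
    simp at this
end
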